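/- Let a : ℝ → ℝ be absolutely continuous with almost-everywhere derivative a' ∈ L^p for some 1 ≤ p < ∞. Then for every t ∈ ℝ, ‖a(· - t) - a + t·a'‖_p ≤ |t| · w_{p,a'}(|t|), where w_{p,v}(δ) = sup_{|s| ≤ δ} ‖v(· - s) - v‖_p is the L^p modulus of continuity of v. -/

import Mathlib

open MeasureTheory Filter
open scoped ENNReal

/-- Jensen-type inequality: on a probability space, `(∫⁻ f)^r ≤ ∫⁻ f^r` for `r ≥ 1`. -/
private lemma jensen_aux {β : Type*} [MeasurableSpace β] (μ : Measure β)
    [IsProbabilityMeasure μ] {f : β → ℝ≥0∞} (hf : AEMeasurable f μ) {r : ℝ} (hr : 1 ≤ r) :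
    (∫⁻ x, f x ∂μ) ^ r ≤ ∫⁻ x, f x ^ r ∂μ := by
  rcases eq_or_lt_of_le hr with h | h
  · simp [← h]
  · have hr0 : (0:ℝ) < r := lt_trans one_pos h
    have hpq : Real.HolderConjugate r (Real.conjExponent r) :=
      Real.HolderConjugate.conjExponent h
    have h1 := ENNReal.lintegral_mul_le_Lp_mul_Lq μ hpq hf
      (aemeasurable_const (b := (1:ℝ≥0∞)))
    simp only [Pi.mul_apply, mul_one, ENNReal.one_rpow, lintegral_const,
      measure_univ, ENNReal.one_rpow, one_mul] at h1
    have h2 := ENNReal.rpow_le_rpow h1 hr0.le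
    rwa [← ENNReal.rpow_mul, one_div, inv_mul_cancel₀ hr0.ne', ENNReal.rpow_one] at h2

/-- If `a` is absolutely continuous with a.e. derivative `a' ∈ L^p`,
then `‖a(· - t) - a + t a'‖_p ≤ |t| ⬝ w_{p,a'}(|t|)`, with `w_{p,v}` the `L^p`
modulus of continuity. -/
theorem lp_smoothness_of_absolutely_continuous
    (p : ℝ≥0∞) (hp1 : 1 ≤ p) (hp : p ≠ ⊤)
    (a a' : ℝ → ℝ)
    (hAC : ∀ x t : ℝ, a (x + t) - a x = t * ∫ s in (0:ℝ)..1, a' (x + s * t))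
    (ha' : MemLp a' p (volume : Measure ℝ)) (t : ℝ) :
    eLpNorm (fun x => a (x - t) - a x + t * a' x) p volume ≤
      ENNReal.ofReal |t| *
        ⨆ s : {s : ℝ // |s| ≤ |t|},
          eLpNorm (fun x => a' (x - s.1) - a' x) p volume := by
  classical
  have hp0 : p ≠ 0 := (lt_of_lt_of_le zero_lt_one hp1).ne'
  set r := p.toReal with hrdef
  have hr1 : (1:ℝ) ≤ r := by
    rw [hrdef, ← ENNReal.toReal_one]
    exact ENNReal.toReal_mono hp hp1
  have hr0 : (0:ℝ) < r := lt_of_lt_of_le one_pos hr1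
  set S := ⨆ s : {s : ℝ // |s| ≤ |t|},
      eLpNorm (fun x => a' (x - s.1) - a' x) p volume with hSdef
  -- measurable representative of a'
  have hsm : AEStronglyMeasurable a' (volume : Measure ℝ) := ha'.aestronglyMeasurable
  set g : ℝ → ℝ := hsm.mk a' with hgdef
  have hg : StronglyMeasurable g := hsm.stronglyMeasurable_mk
  have hgm : Measurable g := hg.measurable
  have hag : a' =ᵐ[volume] g := hsm.ae_eq_mk
  have hgLp : MemLp g p (volume : Measure ℝ) := (memLp_congr_ae hag).1 ha'
  -- the probability measure on (0,1]
  set ν : Measure ℝ := volume.restrict (Set.Ioc (0:ℝ) 1) with hν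
  haveI : IsProbabilityMeasure ν := by
    constructor
    rw [hν, Measure.restrict_apply_univ, Real.volume_Ioc]
    norm_num
  -- translation compatibility
  have htrans : ∀ c : ℝ, (fun x => a' (x - c)) =ᵐ[volume] (fun x => g (x - c)) := fun c =>
    (measurePreserving_sub_right volume c).quasiMeasurePreserving.ae_eq_comp hag
  -- null exceptional set
  set N : Set ℝ := toMeasurable volume {x | a' x ≠ g x} with hNdef
  have hNmeas : MeasurableSet N := measurableSet_toMeasurable _ _
  have hNnull : volume N = 0 := by
    rw [hNdef, measure_toMeasurable]
    exact ae_iff.1 hag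
  have hNsub : {x | a' x ≠ g x} ⊆ N := subset_toMeasurable _ _
  -- a.e. x, for ν-a.e. s, a' (x - s t) = g (x - s t)
  have hsec : ∀ᵐ x ∂(volume : Measure ℝ), ν {s | x - s * t ∈ N} = 0 := by
    have hBmeas : MeasurableSet {q : ℝ × ℝ | q.1 - q.2 * t ∈ N} :=
      (measurable_fst.sub (measurable_snd.mul_const t)) hNmeas
    have hswapmeas : MeasurableSet {q : ℝ × ℝ | q.2 - q.1 * t ∈ N} :=
      (measurable_snd.sub (measurable_fst.mul_const t)) hNmeas
    have h2 : (ν.prod volume) {q : ℝ × ℝ | q.2 - q.1 * t ∈ N} = 0 := by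
      rw [Measure.prod_apply hswapmeas]
      have hz : ∀ s : ℝ, volume {x : ℝ | x - s * t ∈ N} = 0 := by
        intro s
        have hpre : {x : ℝ | x - s * t ∈ N} = (fun x => x - s * t) ⁻¹' N := rfl
        rw [hpre,
          (measurePreserving_sub_right volume (s * t)).measure_preimage
            hNmeas.nullMeasurableSet]
        exact hNnull
      simp [Set.preimage_setOf_eq, hz]
    have key : (volume.prod ν) {q : ℝ × ℝ | q.1 - q.2 * t ∈ N} = 0 := by
      have hswapeq : Prod.swap ⁻¹' {q : ℝ × ℝ | q.1 - q.2 * t ∈ N}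
          = {q : ℝ × ℝ | q.2 - q.1 * t ∈ N} := rfl
      rw [← Measure.prod_swap, Measure.map_apply measurable_swap hBmeas, hswapeq]
      exact h2
    have := (Measure.measure_prod_null hBmeas).1 key
    filter_upwards [this] with x hx
    exact hx
  -- joint measurability
  have hGm : Measurable fun q : ℝ × ℝ => g (q.1 - q.2 * t) :=
    hgm.comp (measurable_fst.sub (measurable_snd.mul_const t))
  -- translation invariance of the L^p integrand
  have hlin : ∀ c : ℝ, ∫⁻ x, (‖g (x - c)‖₊ : ℝ≥0∞) ^ r ∂volume
      = ∫⁻ x, (‖g x‖₊ : ℝ≥0∞) ^ r ∂volume := fun c =>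
    (measurePreserving_sub_right volume c).lintegral_comp (hgm.enorm.pow_const r)
  have hCfin : ∫⁻ x, (‖g x‖₊ : ℝ≥0∞) ^ r ∂volume < ⊤ :=
    lintegral_rpow_enorm_lt_top_of_eLpNorm_lt_top hp0 hp hgLp.2
  -- a.e. x, s ↦ g (x - s t) is ν-integrable
  have hfin : ∀ᵐ x ∂(volume : Measure ℝ),
      (∫⁻ s, (‖g (x - s * t)‖₊ : ℝ≥0∞) ^ r ∂ν) < ⊤ := by
    have hjm : Measurable fun q : ℝ × ℝ => (‖g (q.1 - q.2 * t)‖₊ : ℝ≥0∞) ^ r :=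
      hGm.enorm.pow_const r
    have hswap : ∫⁻ x, ∫⁻ s, (‖g (x - s * t)‖₊ : ℝ≥0∞) ^ r ∂ν ∂volume
        = ∫⁻ s, ∫⁻ x, (‖g (x - s * t)‖₊ : ℝ≥0∞) ^ r ∂volume ∂ν :=
      lintegral_lintegral_swap hjm.aemeasurable
    have htot : ∫⁻ x, ∫⁻ s, (‖g (x - s * t)‖₊ : ℝ≥0∞) ^ r ∂ν ∂volume ≠ ⊤ := by
      rw [hswap]
      have : ∫⁻ s, ∫⁻ x, (‖g (x - s * t)‖₊ : ℝ≥0∞) ^ r ∂volume ∂ν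
          = ∫⁻ s, (∫⁻ x, (‖g x‖₊ : ℝ≥0∞) ^ r ∂volume) ∂ν := by
        apply lintegral_congr
        intro s
        exact hlin (s * t)
      rw [this, lintegral_const, measure_univ, mul_one]
      exact hCfin.ne
    exact ae_lt_top (Measurable.lintegral_prod_right' hjm) htot
  have hInt : ∀ᵐ x ∂(volume : Measure ℝ), Integrable (fun s => g (x - s * t)) ν := by
    filter_upwards [hfin] with x hx
    have hmx : Measurable fun s : ℝ => g (x - s * t) :=
      hgm.comp (measurable_const.sub (measurable_id.mul_const t))
    refine ⟨hmx.aestronglyMeasurable, ?_⟩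
    rw [hasFiniteIntegral_def]
    have hle : (∫⁻ s, (‖g (x - s * t)‖₊ : ℝ≥0∞) ∂ν) ^ r
        ≤ ∫⁻ s, (‖g (x - s * t)‖₊ : ℝ≥0∞) ^ r ∂ν :=
      jensen_aux ν hmx.enorm.aemeasurable hr1
    by_contra hcon
    push_neg at hcon
    have : (∫⁻ s, (‖g (x - s * t)‖₊ : ℝ≥0∞) ∂ν) = ⊤ := top_le_iff.1 hcon
    rw [this, ENNReal.top_rpow_of_pos hr0] at hle
    exact absurd (lt_of_le_of_lt hle hx) (lt_irrefl _)
  -- pointwise a.e. identity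
  have hae_int : (fun x => a (x - t) - a x + t * a' x) =ᵐ[volume]
      (fun x => -t * ∫ s in (0:ℝ)..1, (g (x - s * t) - g x)) := by
    filter_upwards [hsec, hInt, hag] with x hx hxInt hxg
    have h1 : a (x - t) - a x = -t * ∫ s in (0:ℝ)..1, a' (x - s * t) := by
      have h := hAC x (-t)
      simpa only [mul_neg, ← sub_eq_add_neg] using h
    have hae' : ∀ᵐ s ∂(volume : Measure ℝ),
        s ∈ Set.uIoc (0:ℝ) 1 → a' (x - s * t) = g (x - s * t) := by
      rw [ae_iff]
      refine measure_mono_null ?_ (by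
        rw [hν, Measure.restrict_apply'] at hx
        · exact hx
        · exact measurableSet_Ioc)
      intro s hs
      simp only [Set.mem_setOf_eq, not_forall] at hs
      obtain ⟨hs1, hs2⟩ := hs
      rw [Set.uIoc_of_le zero_le_one] at hs1
      exact ⟨hNsub hs2, hs1⟩
    have h2 : ∫ s in (0:ℝ)..1, a' (x - s * t) = ∫ s in (0:ℝ)..1, g (x - s * t) :=
      intervalIntegral.integral_congr_ae hae'
    have hii : IntervalIntegrable (fun s => g (x - s * t)) volume 0 1 := by
      rw [intervalIntegrable_iff, Set.uIoc_of_le zero_le_one]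
      exact hxInt
    have h3 : ∫ s in (0:ℝ)..1, (g (x - s * t) - g x)
        = (∫ s in (0:ℝ)..1, g (x - s * t)) - g x := by
      rw [intervalIntegral.integral_sub hii intervalIntegrable_const,
        intervalIntegral.integral_const]
      simp
    calc a (x - t) - a x + t * a' x
        = -t * (∫ s in (0:ℝ)..1, g (x - s * t)) + t * g x := by rw [h1, h2, hxg]
      _ = -t * ((∫ s in (0:ℝ)..1, g (x - s * t)) - g x) := by ring
      _ = -t * ∫ s in (0:ℝ)..1, (g (x - s * t) - g x) := by rw [h3]
  -- the core estimate
  set G : ℝ → ℝ := fun x => ∫ s in (0:ℝ)..1, (g (x - s * t) - g x) with hGdef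
  have hG1 : ∀ x, (‖G x‖₊ : ℝ≥0∞) ≤ ∫⁻ s, (‖g (x - s * t) - g x‖₊ : ℝ≥0∞) ∂ν := by
    intro x
    have : G x = ∫ s in Set.Ioc (0:ℝ) 1, (g (x - s * t) - g x) ∂volume :=
      intervalIntegral.integral_of_le (by norm_num)
    rw [this]
    exact enorm_integral_le_lintegral_enorm _
  have hjm2 : Measurable fun q : ℝ × ℝ => (‖g (q.1 - q.2 * t) - g q.1‖₊ : ℝ≥0∞) ^ r :=
    ((hGm.sub (hgm.comp measurable_fst)).enorm).pow_const r
  have key : ∫⁻ x, (‖G x‖₊ : ℝ≥0∞) ^ r ∂volume ≤ S ^ r := by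
    have step1 : ∀ x, (‖G x‖₊ : ℝ≥0∞) ^ r
        ≤ ∫⁻ s, (‖g (x - s * t) - g x‖₊ : ℝ≥0∞) ^ r ∂ν := by
      intro x
      refine le_trans (ENNReal.rpow_le_rpow (hG1 x) hr0.le) ?_
      have hmx : Measurable fun s : ℝ => g (x - s * t) - g x :=
        (hgm.comp (measurable_const.sub (measurable_id.mul_const t))).sub measurable_const
      exact jensen_aux ν hmx.enorm.aemeasurable hr1
    have step2 : ∀ s ∈ Set.Ioc (0:ℝ) 1,
        ∫⁻ x, (‖g (x - s * t) - g x‖₊ : ℝ≥0∞) ^ r ∂volume ≤ S ^ r := by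
      intro s hs
      have habs : |s * t| ≤ |t| := by
        rw [abs_mul]
        have hs1 : |s| ≤ 1 := by
          rw [abs_of_pos hs.1]
          exact hs.2
        nlinarith [abs_nonneg t, abs_nonneg s]
      have heq : eLpNorm (fun x => g (x - s * t) - g x) p volume
          = eLpNorm (fun x => a' (x - s * t) - a' x) p volume := by
        refine eLpNorm_congr_ae ?_
        exact ((htrans (s * t)).symm.sub hag.symm)
      have hle : eLpNorm (fun x => g (x - s * t) - g x) p volume ≤ S := by
        rw [heq, hSdef]
        exact le_iSup (fun u : {s : ℝ // |s| ≤ |t|} =>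
          eLpNorm (fun x => a' (x - u.1) - a' x) p volume) ⟨s * t, habs⟩
      have hrw : ∫⁻ x, (‖g (x - s * t) - g x‖₊ : ℝ≥0∞) ^ r ∂volume
          = (eLpNorm (fun x => g (x - s * t) - g x) p volume) ^ r := by
        rw [eLpNorm_eq_lintegral_rpow_enorm_toReal hp0 hp, ← hrdef, ← ENNReal.rpow_mul,
          one_div, inv_mul_cancel₀ hr0.ne', ENNReal.rpow_one]
        rfl
      rw [hrw]
      exact ENNReal.rpow_le_rpow hle hr0.le
    calc ∫⁻ x, (‖G x‖₊ : ℝ≥0∞) ^ r ∂volume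
        ≤ ∫⁻ x, ∫⁻ s, (‖g (x - s * t) - g x‖₊ : ℝ≥0∞) ^ r ∂ν ∂volume :=
          lintegral_mono step1
      _ = ∫⁻ s, ∫⁻ x, (‖g (x - s * t) - g x‖₊ : ℝ≥0∞) ^ r ∂volume ∂ν :=
          lintegral_lintegral_swap hjm2.aemeasurable
      _ ≤ ∫⁻ _, S ^ r ∂ν := by
          rw [hν]
          refine setLIntegral_mono' measurableSet_Ioc ?_
          intro s hs
          exact step2 s hs
      _ = S ^ r := by rw [lintegral_const, measure_univ, mul_one]
  have hS : eLpNorm G p volume ≤ S := by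
    rw [eLpNorm_eq_lintegral_rpow_enorm_toReal hp0 hp, ← hrdef]
    calc (∫⁻ x, (‖G x‖₊ : ℝ≥0∞) ^ r ∂volume) ^ (1 / r)
        ≤ (S ^ r) ^ (1 / r) := ENNReal.rpow_le_rpow key (by positivity)
      _ = S := by
          rw [← ENNReal.rpow_mul, mul_one_div_cancel hr0.ne', ENNReal.rpow_one]
  calc eLpNorm (fun x => a (x - t) - a x + t * a' x) p volume
      = eLpNorm (fun x => -t * G x) p volume := eLpNorm_congr_ae hae_int
    _ = (‖(-t : ℝ)‖₊ : ℝ≥0∞) * eLpNorm G p volume := by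
        have : (fun x => -t * G x) = (-t : ℝ) • G := by
          funext x; simp [smul_eq_mul]
        rw [this, eLpNorm_const_smul]
        rfl
    _ ≤ ENNReal.ofReal |t| * S := by
        rw [show ((‖(-t : ℝ)‖₊ : ℝ≥0∞)) = ENNReal.ofReal |t| by
          rw [← enorm_eq_nnnorm, Real.enorm_eq_ofReal_abs, abs_neg]]
        exact mul_le_mul_right hS _
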